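/- Let α ∈ (0,1) be irrational, and let n ≥ 1 with k_0(n) ≥ L where L ≥ 2 (or L ≥ 1 if α < 1/2). Let ∥·∥* be the one-sided distance with ∥nα∥* < 1/2. Then ∥nα∥* = min{ ∥xα∥* : n ≤ x < n + q_{L−1} + q_L }. Moreover, if the Ostrowski digit b_L(n) ≤ a_{L+1} − 1, then ∥nα∥* = min{ ∥xα∥* : n ≤ x < n + q_{L−1} + 2q_L }. -/

import Mathlib

/-- Gauss-map iterates of `α`. -/
noncomputable def cfFrac (α : ℝ) : ℕ → ℝ
  | 0 => α
  | k + 1 => Int.fract (1 / cfFrac α k)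

/-- Partial quotients of `α` (1-indexed, `cfA α 0 = 0` unused). -/
noncomputable def cfA (α : ℝ) : ℕ → ℕ
  | 0 => 0
  | k + 1 => (⌊1 / cfFrac α k⌋).toNat

/-- Numerators of the convergents of `α`. -/
noncomputable def cfP (α : ℝ) : ℕ → ℕ
  | 0 => 0
  | 1 => 1
  | k + 2 => cfA α (k + 2) * cfP α (k + 1) + cfP α k

/-- Denominators of the convergents of `α`. -/
noncomputable def cfQ (α : ℝ) : ℕ → ℕ
  | 0 => 1
  | 1 => cfA α 1
  | k + 2 => cfA α (k + 2) * cfQ α (k + 1) + cfQ α k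

/-- Distance from `x` to the nearest integer. -/
noncomputable def distNearInt (x : ℝ) : ℝ := min (Int.fract x) (1 - Int.fract x)

/-- `b` is the sequence of digits of an Ostrowski representation of `n` w.r.t. `α`:
`n = Σ b_k q_k` with `0 ≤ b_0 ≤ a_1 - 1`, `0 ≤ b_k ≤ a_{k+1}` for `k ≥ 1`, and
`b_{k-1} = 0` whenever `b_k = a_{k+1}`. -/
def OstrowskiRep (α : ℝ) (n : ℕ) (b : ℕ → ℕ) : Prop :=
  b 0 ≤ cfA α 1 - 1 ∧
  (∀ k, 1 ≤ k → b k ≤ cfA α (k + 1)) ∧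
  (∀ k, 1 ≤ k → b k = cfA α (k + 1) → b (k - 1) = 0) ∧
  ∃ N, (∀ k, N < k → b k = 0) ∧ n = ∑ k ∈ Finset.range (N + 1), b k * cfQ α k

section basics
variable {α : ℝ}

lemma cfFrac_basic (hα : α ∈ Set.Ioo (0:ℝ) 1) (hirr : Irrational α) : ∀ k, Irrational (cfFrac α k) ∧ 0 < cfFrac α k ∧ cfFrac α k < 1 := by
  intro k
  induction k with
  | zero => exact ⟨hirr, hα.1, hα.2⟩
  | succ k ih =>
    obtain ⟨hi, h0, h1⟩ := ih
    have hne : cfFrac α k ≠ 0 := ne_of_gt h0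
    have hinv : Irrational (1 / cfFrac α k) := by
      simpa [one_div] using hi.inv
    have hfr : Irrational (Int.fract (1 / cfFrac α k)) := by
      unfold Int.fract
      exact hinv.sub_intCast _
    refine ⟨by simpa [cfFrac] using hfr, ?_, ?_⟩
    · have := Int.fract_nonneg (1 / cfFrac α k)
      rcases this.lt_or_eq with h | h
      · simpa [cfFrac] using h
      · exfalso
        have : Int.fract (1 / cfFrac α k) ≠ ((0:ℤ):ℝ) := hfr.ne_int 0
        rw [← h] at this
        simp [one_div] at this
    · simpa [cfFrac] using Int.fract_lt_one (1 / cfFrac α k)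

lemma one_lt_inv_cfFrac (hα : α ∈ Set.Ioo (0:ℝ) 1) (hirr : Irrational α) (k : ℕ) : 1 < 1 / cfFrac α k := by
  obtain ⟨_, h0, h1⟩ := cfFrac_basic hα hirr k
  rw [lt_div_iff₀ h0]; linarith

lemma cfA_cast (hα : α ∈ Set.Ioo (0:ℝ) 1) (hirr : Irrational α) (k : ℕ) : (cfA α (k+1) : ℤ) = ⌊1 / cfFrac α k⌋ := by
  have h := one_lt_inv_cfFrac hα hirr k
  have h1 : (1:ℤ) ≤ ⌊1 / cfFrac α k⌋ := Int.le_floor.mpr (by exact_mod_cast h.le)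
  rw [show cfA α (k+1) = (⌊1 / cfFrac α k⌋).toNat from rfl]
  rw [Int.toNat_of_nonneg (by linarith)]

lemma cfA_pos (hα : α ∈ Set.Ioo (0:ℝ) 1) (hirr : Irrational α) (k : ℕ) : 1 ≤ cfA α (k+1) := by
  have h := one_lt_inv_cfFrac hα hirr k
  have : (1:ℤ) ≤ ⌊1 / cfFrac α k⌋ := Int.le_floor.mpr (by exact_mod_cast h.le)
  have := cfA_cast hα hirr k
  omega

lemma t_rel (hα : α ∈ Set.Ioo (0:ℝ) 1) (hirr : Irrational α) (k : ℕ) : cfFrac α k * ((cfA α (k+1) : ℝ) + cfFrac α (k+1)) = 1 := by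
  obtain ⟨_, h0, _⟩ := cfFrac_basic hα hirr k
  have h1 : (cfFrac α (k+1) : ℝ) = Int.fract (1 / cfFrac α k) := by simp [cfFrac]
  have h2 : ((cfA α (k+1) : ℝ)) = (⌊1 / cfFrac α k⌋ : ℤ) := by
    exact_mod_cast congrArg (fun z : ℤ => (z : ℝ)) (cfA_cast hα hirr k)
  rw [h1, h2, Int.fract]
  have h0' : cfFrac α k ≠ 0 := ne_of_gt h0
  field_simp
  ring

end basics

noncomputable def Del (α : ℝ) (k : ℕ) : ℝ := ∏ i ∈ Finset.range k, cfFrac α i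

noncomputable def theta (α : ℝ) (k : ℕ) : ℝ := (cfQ α k : ℝ) * α - (cfP α k : ℝ)

section dels
variable {α : ℝ}

lemma Del_succ (k : ℕ) : Del α (k+1) = Del α k * cfFrac α k := Finset.prod_range_succ _ _

lemma Del_pos (hα : α ∈ Set.Ioo (0:ℝ) 1) (hirr : Irrational α) (k : ℕ) : 0 < Del α k :=
  Finset.prod_pos fun i _ => (cfFrac_basic hα hirr i).2.1

lemma Del_zero : Del α 0 = 1 := Finset.prod_range_zero _

lemma Del_one : Del α 1 = α := by simp [Del, cfFrac]

lemma Del_lt (hα : α ∈ Set.Ioo (0:ℝ) 1) (hirr : Irrational α) (k : ℕ) :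
    Del α (k+1) < Del α k := by
  rw [Del_succ]
  have h := (cfFrac_basic hα hirr k).2
  nlinarith [Del_pos hα hirr k]

lemma Del_anti (hα : α ∈ Set.Ioo (0:ℝ) 1) (hirr : Irrational α) {j k : ℕ} (h : j ≤ k) :
    Del α k ≤ Del α j := by
  induction k with
  | zero => simp_all
  | succ k ih =>
    rcases Nat.lt_or_ge j (k+1) with h' | h'
    · exact le_trans (Del_lt hα hirr k).le (ih (by omega))
    · have : j = k+1 := by omega
      simp [this]

lemma Del_rec (hα : α ∈ Set.Ioo (0:ℝ) 1) (hirr : Irrational α) (k : ℕ) :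
    Del α k = (cfA α (k+1) : ℝ) * Del α (k+1) + Del α (k+2) := by
  have h := t_rel hα hirr k
  rw [Del_succ (k+1), Del_succ k]
  linear_combination (-(Del α k)) * h

lemma theta_eq (hα : α ∈ Set.Ioo (0:ℝ) 1) (hirr : Irrational α) (k : ℕ) :
    theta α k = (-1:ℝ)^k * Del α (k+1) := by
  induction k using Nat.twoStepInduction with
  | zero => simp [theta, cfQ, cfP, Del_one]
  | one =>
    have h := Del_rec hα hirr 0
    rw [Del_zero, show (0:ℕ)+1 = 1 from rfl, show (0:ℕ)+2 = 2 from rfl, Del_one] at h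
    simp only [theta, cfQ, cfP]
    push_cast
    norm_num
    linarith
  | more k ih1 ih2 =>
    have hq : (cfQ α (k+2) : ℝ) = (cfA α (k+2) : ℝ) * cfQ α (k+1) + cfQ α k := by
      rw [show cfQ α (k+2) = cfA α (k + 2) * cfQ α (k + 1) + cfQ α k from rfl]; push_cast; ring
    have hp : (cfP α (k+2) : ℝ) = (cfA α (k+2) : ℝ) * cfP α (k+1) + cfP α k := by
      rw [show cfP α (k+2) = cfA α (k + 2) * cfP α (k + 1) + cfP α k from rfl]; push_cast; ring
    have hrec := Del_rec hα hirr (k+1)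
    have e1 : theta α (k+2) = (cfA α (k+2) : ℝ) * theta α (k+1) + theta α k := by
      simp only [theta, hq, hp]; ring
    rw [e1, ih1, ih2, show Del α (k+1+1) = Del α (k+2) from rfl]
    rw [show ((k:ℕ)+2) = k+2 from rfl]
    have : Del α (k+2+1) = Del α (k+1) - (cfA α (k+2):ℝ) * Del α (k+2) := by
      rw [hrec]; ring
    rw [this]
    ring

lemma cfQ_pos (hα : α ∈ Set.Ioo (0:ℝ) 1) (hirr : Irrational α) (k : ℕ) : 1 ≤ cfQ α k := by
  induction k using Nat.twoStepInduction with
  | zero => simp [cfQ]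
  | one => simpa [cfQ] using cfA_pos hα hirr 0
  | more k ih1 ih2 =>
    have := cfA_pos hα hirr (k+1)
    rw [show cfQ α (k+2) = cfA α (k + 2) * cfQ α (k + 1) + cfQ α k from rfl]
    nlinarith

lemma cfQ_mono (hα : α ∈ Set.Ioo (0:ℝ) 1) (hirr : Irrational α) (k : ℕ) :
    cfQ α k ≤ cfQ α (k+1) := by
  cases k with
  | zero => simpa [cfQ] using cfA_pos hα hirr 0
  | succ k =>
    have h1 := cfA_pos hα hirr (k+1)
    have h2 := cfQ_pos hα hirr (k+1)
    rw [show cfQ α (k+2) = cfA α (k + 2) * cfQ α (k + 1) + cfQ α k from rfl]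
    nlinarith

lemma det_cf (k : ℕ) : (cfP α (k+1) : ℤ) * cfQ α k - (cfP α k : ℤ) * cfQ α (k+1) = (-1)^k := by
  induction k with
  | zero => simp [cfP, cfQ]
  | succ k ih =>
    rw [show cfP α (k+2) = cfA α (k + 2) * cfP α (k + 1) + cfP α k from rfl,
        show cfQ α (k+2) = cfA α (k + 2) * cfQ α (k + 1) + cfQ α k from rfl]
    push_cast
    linear_combination (-1 : ℤ) * ih

end dels

section key
variable {α : ℝ}

set_option maxHeartbeats 1600000 in
lemma keyClass (hα : α ∈ Set.Ioo (0:ℝ) 1) (hirr : Irrational α)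
    (l c : ℕ) (hc : 1 ≤ c) (m : ℕ) (p : ℤ) (hm1 : 1 ≤ m)
    (hm2 : m < cfQ α l + c * cfQ α (l+1))
    (h : |(m:ℝ)*α - p| < Del α (l+1) - ((c:ℝ)-1) * Del α (l+2)) :
    ∃ y : ℕ, 1 ≤ y ∧ y ≤ c ∧ m = y * cfQ α (l+1) ∧ p = (y:ℤ) * cfP α (l+1) := by
  have hdet := det_cf (α := α) l
  have hsq : ((-1:ℤ)^l) * ((-1:ℤ)^l) = 1 := by
    rw [← pow_add]; exact Even.neg_one_pow ⟨l, rfl⟩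
  obtain ⟨x, hxdef⟩ : ∃ x:ℤ, x = (-1)^l * ((m:ℤ) * cfP α (l+1) - p * cfQ α (l+1)) := ⟨_, rfl⟩
  obtain ⟨y, hydef⟩ : ∃ y:ℤ, y = (-1)^l * (p * cfQ α l - (m:ℤ) * cfP α l) := ⟨_, rfl⟩
  have hm : (m:ℤ) = x * cfQ α l + y * cfQ α (l+1) := by
    rw [hxdef, hydef]
    linear_combination (-((-1:ℤ)^l * (m:ℤ))) * hdet - (m:ℤ) * hsq
  have hp : p = x * cfP α l + y * cfP α (l+1) := by
    rw [hxdef, hydef]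
    linear_combination (-((-1:ℤ)^l * p)) * hdet - p * hsq
  -- pass to the reals
  have hmR : (m:ℝ) = (x:ℝ) * cfQ α l + (y:ℝ) * cfQ α (l+1) := by exact_mod_cast hm
  have hpR : (p:ℝ) = (x:ℝ) * cfP α l + (y:ℝ) * cfP α (l+1) := by exact_mod_cast hp
  have htheta : (m:ℝ) * α - p = (x:ℝ) * theta α l + (y:ℝ) * theta α (l+1) := by
    simp only [theta]
    linear_combination α * hmR - hpR
  have hsR : ((-1:ℝ)^l) * ((-1:ℝ)^l) = 1 := by
    rw [← pow_add]; exact Even.neg_one_pow ⟨l, rfl⟩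
  have hval : (m:ℝ) * α - p = (-1:ℝ)^l * ((x:ℝ) * Del α (l+1) - (y:ℝ) * Del α (l+2)) := by
    rw [htheta, theta_eq hα hirr l, theta_eq hα hirr (l+1)]
    ring
  have habs : |(x:ℝ) * Del α (l+1) - (y:ℝ) * Del α (l+2)| < Del α (l+1) - ((c:ℝ)-1) * Del α (l+2) := by
    have : |(m:ℝ)*α - p| = |(x:ℝ) * Del α (l+1) - (y:ℝ) * Del α (l+2)| := by
      rw [hval, abs_mul, abs_pow, abs_neg, abs_one, one_pow, one_mul]
    rwa [this] at h
  rw [abs_lt] at habs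
  obtain ⟨hV1, hV2⟩ := habs
  have hD1 : 0 < Del α (l+1) := Del_pos hα hirr _
  have hD2 : 0 < Del α (l+2) := Del_pos hα hirr _
  have hD21 : Del α (l+2) < Del α (l+1) := Del_lt hα hirr _
  have hq1 : 1 ≤ cfQ α l := cfQ_pos hα hirr l
  have hq2 : 1 ≤ cfQ α (l+1) := cfQ_pos hα hirr (l+1)
  have hqm : cfQ α l ≤ cfQ α (l+1) := cfQ_mono hα hirr l
  have hcR : (1:ℝ) ≤ c := by exact_mod_cast hc
  clear hdet hsq hxdef hydef hmR hpR htheta hsR hval h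
  -- x must be 0
  have hx0 : x = 0 := by
    by_contra hx
    rcases lt_trichotomy x 0 with hxneg | hxz | hxpos
    · -- x ≤ -1
      have hxR : (x:ℝ) ≤ -1 := by exact_mod_cast (by omega : x ≤ -1)
      rcases lt_trichotomy y 0 with hyneg | hyz | hypos
      · -- m = x q_l + y q_{l+1} ≤ - q_l - q_{l+1} < 1
        have h1 : (1:ℤ) ≤ m := by exact_mod_cast hm1
        have hq1' : (1:ℤ) ≤ (cfQ α l : ℤ) := by exact_mod_cast hq1
        have hq2' : (1:ℤ) ≤ (cfQ α (l+1) : ℤ) := by exact_mod_cast hq2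
        have t1 : x * cfQ α l ≤ -cfQ α l := by nlinarith
        have t2 : y * cfQ α (l+1) ≤ -cfQ α (l+1) := by nlinarith
        linarith [hm]
      · -- y = 0 : |x| D1 ≥ D1 contradiction
        have hyR : (y:ℝ) = 0 := by rw [hyz]; simp
        rw [hyR] at hV1
        nlinarith
      · -- x < 0 < y : value ≤ -D1 - D2
        have hyR : (1:ℝ) ≤ (y:ℝ) := by exact_mod_cast (by omega : (1:ℤ) ≤ y)
        nlinarith
    · exact hx hxz
    · -- x ≥ 1
      have hxR : (1:ℝ) ≤ (x:ℝ) := by exact_mod_cast (by omega : (1:ℤ) ≤ x)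
      rcases lt_trichotomy y 0 with hyneg | hyz | hypos
      · have hyR : (y:ℝ) ≤ -1 := by exact_mod_cast (by omega : y ≤ -1)
        nlinarith
      · have hyR : (y:ℝ) = 0 := by rw [hyz]; simp
        rw [hyR] at hV2
        nlinarith
      · -- x ≥ 1, y ≥ 1 : then y ≤ c-1 by size, and value ≥ bound
        have hyc : y ≤ (c:ℤ) - 1 := by
          by_contra hyc
          push_neg at hyc
          have : (m:ℤ) < cfQ α l + c * cfQ α (l+1) := by exact_mod_cast hm2
          nlinarith [(by exact_mod_cast hq1 : (1:ℤ) ≤ (cfQ α l : ℤ)),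
            (by exact_mod_cast hq2 : (1:ℤ) ≤ (cfQ α (l+1) : ℤ))]
        have hycR : (y:ℝ) ≤ (c:ℝ) - 1 := by exact_mod_cast hyc
        have hy1R : (1:ℝ) ≤ (y:ℝ) := by exact_mod_cast (by omega : (1:ℤ) ≤ y)
        nlinarith
  -- so m = y q_{l+1}
  rw [hx0] at hm hp
  simp only [Int.cast_zero, zero_mul, zero_add] at hm hp
  have hy1 : 1 ≤ y := by
    by_contra hy
    push_neg at hy
    have h1 : (1:ℤ) ≤ m := by exact_mod_cast hm1
    nlinarith [(by exact_mod_cast hq2 : (1:ℤ) ≤ (cfQ α (l+1) : ℤ))]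
  have hyc : y ≤ c := by
    by_contra hy
    push_neg at hy
    have h2 : (m:ℤ) < cfQ α l + c * cfQ α (l+1) := by exact_mod_cast hm2
    nlinarith [(by exact_mod_cast hq1 : (1:ℤ) ≤ (cfQ α l : ℤ)),
      (by exact_mod_cast hq2 : (1:ℤ) ≤ (cfQ α (l+1) : ℤ)),
      (by exact_mod_cast hqm : (cfQ α l : ℤ) ≤ (cfQ α (l+1) : ℤ))]
  refine ⟨y.toNat, ?_, ?_, ?_, ?_⟩
  · omega
  · omega
  · have : (m:ℤ) = (y.toNat : ℤ) * cfQ α (l+1) := by rw [Int.toNat_of_nonneg (by omega)]; exact hm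
    exact_mod_cast this
  · rw [Int.toNat_of_nonneg (by omega)]; exact hp

end key

noncomputable def tailSum (α : ℝ) (b : ℕ → ℕ) (N j : ℕ) : ℝ :=
  ∑ k ∈ Finset.Ico j (N+1), (b k : ℝ) * theta α k

section tails
variable {α : ℝ}

lemma tailSum_empty (b : ℕ → ℕ) (N j : ℕ) (h : N + 1 ≤ j) : tailSum α b N j = 0 := by
  unfold tailSum
  rw [Finset.Ico_eq_empty (by omega)]
  simp

lemma tailSum_expand (b : ℕ → ℕ) (N j : ℕ) (h : j ≤ N) :
    tailSum α b N j = (b j : ℝ) * theta α j + tailSum α b N (j+1) := by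
  unfold tailSum
  rw [Finset.sum_eq_sum_Ico_succ_bot (by omega)]

lemma negpow_sq (j : ℕ) : ((-1:ℝ)^j) * ((-1:ℝ)^j) = 1 := by
  rw [← pow_add]; exact Even.neg_one_pow ⟨j, rfl⟩

lemma tail_invariant (hα : α ∈ Set.Ioo (0:ℝ) 1) (hirr : Irrational α)
    (b : ℕ → ℕ) (N : ℕ) (hdig : ∀ k, 1 ≤ k → b k ≤ cfA α (k+1)) :
    ∀ j, 1 ≤ j → (-Del α (j+1) < (-1:ℝ)^j * tailSum α b N j ∧
      (-1:ℝ)^j * tailSum α b N j < Del α j) := by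
  suffices H : ∀ d j, 1 ≤ j → N + 1 ≤ j + d →
      (-Del α (j+1) < (-1:ℝ)^j * tailSum α b N j ∧
        (-1:ℝ)^j * tailSum α b N j < Del α j) by
    intro j hj
    exact H (N+1) j hj (by omega)
  intro d
  induction d with
  | zero =>
    intro j hj hNd
    rw [tailSum_empty b N j (by omega)]
    simp only [mul_zero]
    exact ⟨by linarith [Del_pos hα hirr (j+1)], Del_pos hα hirr j⟩
  | succ d ih =>
    intro j hj hNd
    rcases le_or_gt (N+1) j with h' | h'
    · rw [tailSum_empty b N j h']
      simp only [mul_zero]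
      exact ⟨by linarith [Del_pos hα hirr (j+1)], Del_pos hα hirr j⟩
    · obtain ⟨ih1, ih2⟩ := ih (j+1) (by omega) (by omega)
      rw [tailSum_expand b N j (by omega)]
      have hth : theta α j = (-1:ℝ)^j * Del α (j+1) := theta_eq hα hirr j
      have hsq := negpow_sq j
      have key : (-1:ℝ)^j * ((b j : ℝ) * theta α j + tailSum α b N (j+1))
          = (b j : ℝ) * Del α (j+1) - (-1:ℝ)^(j+1) * tailSum α b N (j+1) := by
        rw [hth, pow_succ]
        linear_combination ((b j:ℝ) * Del α (j+1)) * hsq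
      rw [key]
      have hbd : (b j : ℝ) ≤ (cfA α (j+1) : ℝ) := by exact_mod_cast hdig j hj
      have hb0 : (0:ℝ) ≤ (b j : ℝ) := by positivity
      have hrec := Del_rec hα hirr j
      have hD : 0 < Del α (j+1) := Del_pos hα hirr (j+1)
      constructor
      · nlinarith
      · nlinarith

end tails

section master
variable {α : ℝ}

lemma final_contra (hα : α ∈ Set.Ioo (0:ℝ) 1) (hirr : Irrational α)
    (l c k0 : ℕ) (hc : 1 ≤ c) (hk01 : l + 1 ≤ k0) (s0 : ℝ)
    (hs0pos : 0 < s0) (hs0lt : s0 < Del α k0)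
    (hbound : s0 < Del α (l+1) - ((c:ℝ)-1) * Del α (l+2))
    (m : ℕ) (p : ℤ) (hm1 : 1 ≤ m) (hm2 : m < cfQ α l + c * cfQ α (l+1))
    (hsmall : |(m:ℝ)*α - p| < s0)
    (hsign : ((m:ℝ)*α - p) * ((-1:ℝ)^k0 * s0) < 0) : False := by
  obtain ⟨y, hy1, hyc, hmy, hpy⟩ := keyClass hα hirr l c hc m p hm1 hm2
    (lt_trans hsmall hbound)
  have hη : (m:ℝ)*α - p = (y:ℝ) * theta α (l+1) := by
    rw [hmy]
    rw [show ((y * cfQ α (l+1) : ℕ) : ℝ) = (y:ℝ) * (cfQ α (l+1) : ℝ) by push_cast; ring]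
    rw [show ((p : ℤ) : ℝ) = (y:ℝ) * (cfP α (l+1) : ℝ) by rw [hpy]; push_cast; ring]
    simp only [theta]
    ring
  have hθ : theta α (l+1) = (-1:ℝ)^(l+1) * Del α (l+2) := theta_eq hα hirr (l+1)
  have hD2 : 0 < Del α (l+2) := Del_pos hα hirr _
  have hyR : (1:ℝ) ≤ (y:ℝ) := by exact_mod_cast hy1
  rcases hk01.lt_or_eq with hlt | heq
  · -- k0 ≥ l+2 : |η| ≥ Del (l+2) ≥ Del k0 > s0
    have habs : |(m:ℝ)*α - p| = (y:ℝ) * Del α (l+2) := by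
      rw [hη, hθ, abs_mul, abs_mul, abs_pow, abs_neg, abs_one, one_pow, one_mul,
        Nat.abs_cast, abs_of_pos hD2]
    have h1 : Del α k0 ≤ Del α (l+2) := Del_anti hα hirr (by omega)
    rw [habs] at hsmall
    nlinarith
  · -- k0 = l+1 : sign contradiction
    subst heq
    have hcontr : ((m:ℝ)*α - p) * ((-1:ℝ)^(l+1) * s0)
        = (y:ℝ) * Del α (l+2) * s0 * (((-1:ℝ)^(l+1)) * ((-1:ℝ)^(l+1))) := by
      rw [hη, hθ]; ring
    rw [hcontr, negpow_sq (l+1), mul_one] at hsign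
    nlinarith [mul_pos (mul_pos (lt_of_lt_of_le one_pos hyR) hD2) hs0pos]

set_option maxHeartbeats 1600000 in
lemma master (hα : α ∈ Set.Ioo (0:ℝ) 1) (hirr : Irrational α)
    (n : ℕ) (hn : 1 ≤ n) (b : ℕ → ℕ) (hb : OstrowskiRep α n b)
    (l : ℕ) (hL0 : ∀ k, k < l + 1 → b k = 0)
    (hhalf : Del α (l+1) ≤ 1/2)
    (c : ℕ) (hc : c = 1 ∨ c = 2)
    (hc2 : c = 2 → ((b (l+1) : ℝ) ≤ (cfA α (l+2) : ℝ) - 1 ∧ 2 ≤ cfA α (l+2)))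
    (f : ℝ → ℝ) (hf : f = (fun ξ => Int.fract ξ) ∨ f = (fun ξ => Int.fract (-ξ)))
    (hfn : f ((n : ℝ) * α) < 1 / 2) :
    ∀ x : ℕ, n ≤ x → x < n + cfQ α l + c * cfQ α (l+1) →
      f ((n : ℝ) * α) ≤ f ((x : ℝ) * α) := by
  obtain ⟨hb0, hdig, hmarkov, N, hzero, hsum⟩ := hb
  have hc1 : 1 ≤ c := by omega
  -- least nonzero digit
  have hex : ∃ k, b k ≠ 0 := by
    by_contra h
    push_neg at h
    rw [Finset.sum_eq_zero (fun k _ => by rw [h k, zero_mul])] at hsum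
    omega
  set k0 := Nat.find hex with hk0def
  have hk0ne : b k0 ≠ 0 := Nat.find_spec hex
  have hk0min : ∀ k, k < k0 → b k = 0 := fun k hk => by
    by_contra h; exact absurd (Nat.find_min hex hk) (by simp [h])
  have hk0l : l + 1 ≤ k0 := by
    by_contra h; push_neg at h; exact hk0ne (hL0 k0 h)
  have hk0N : k0 ≤ N := by
    by_contra h; push_neg at h; exact hk0ne (hzero k0 h)
  -- the error ε = tailSum
  set P : ℤ := ∑ k ∈ Finset.Ico k0 (N+1), (b k : ℤ) * cfP α k with hPdef
  have hsum' : (n:ℝ) = ∑ k ∈ Finset.Ico k0 (N+1), (b k : ℝ) * (cfQ α k : ℝ) := by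
    have h1 : n = ∑ k ∈ Finset.Ico k0 (N+1), b k * cfQ α k := by
      rw [hsum, Finset.range_eq_Ico]
      refine (Finset.sum_subset (Finset.Ico_subset_Ico (by omega) le_rfl) ?_).symm
      intro k hk hk'
      simp only [Finset.mem_Ico] at hk hk'
      rw [hk0min k (by omega), zero_mul]
    rw [h1]
    push_cast
    rfl
  have hPR : (P:ℝ) = ∑ k ∈ Finset.Ico k0 (N+1), (b k : ℝ) * (cfP α k : ℝ) := by
    rw [hPdef]; push_cast; rfl
  have hTS : (n:ℝ) * α - P = tailSum α b N k0 := by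
    unfold tailSum theta
    rw [hsum', hPR, Finset.sum_mul, ← Finset.sum_sub_distrib]
    exact Finset.sum_congr rfl fun k _ => by ring
  set T : ℝ := tailSum α b N k0 with hTdef
  set s0 : ℝ := (-1:ℝ)^k0 * T with hs0def
  have hk01 : 1 ≤ k0 := by omega
  obtain ⟨hinv1, hinv2⟩ := tail_invariant hα hirr b N hdig k0 hk01
  obtain ⟨hinv1', hinv2'⟩ := tail_invariant hα hirr b N hdig (k0+1) (by omega)
  have hs0lt : s0 < Del α k0 := hinv2
  have hs0pos : 0 < s0 := by
    have hexp : T = (b k0 : ℝ) * theta α k0 + tailSum α b N (k0+1) :=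
      tailSum_expand b N k0 hk0N
    have hth : theta α k0 = (-1:ℝ)^k0 * Del α (k0+1) := theta_eq hα hirr k0
    have hkey : s0 = (b k0 : ℝ) * Del α (k0+1) - (-1:ℝ)^(k0+1) * tailSum α b N (k0+1) := by
      rw [hs0def, hexp, hth, pow_succ]
      linear_combination ((b k0:ℝ) * Del α (k0+1)) * negpow_sq k0
    have hb1 : (1:ℝ) ≤ (b k0 : ℝ) := by exact_mod_cast Nat.one_le_iff_ne_zero.mpr hk0ne
    have hD : 0 < Del α (k0+1) := Del_pos hα hirr _
    rw [hkey]
    nlinarith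
  have hT : T = (-1:ℝ)^k0 * s0 := by
    rw [hs0def]
    linear_combination (-(T:ℝ)) * negpow_sq k0
  -- the bound needed for keyClass
  have hbound : s0 < Del α (l+1) - ((c:ℝ)-1) * Del α (l+2) := by
    rcases hc with h1 | h2
    · subst h1
      push_cast
      simp only [sub_self, zero_mul, sub_zero]
      exact lt_of_lt_of_le hs0lt (Del_anti hα hirr hk0l)
    · obtain ⟨hbL, ha2⟩ := hc2 h2
      subst h2
      push_cast
      rw [show ((2:ℝ) - 1) = 1 by norm_num, one_mul]
      have hrec := Del_rec hα hirr (l+1)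
      have hD3 : 0 < Del α (l+3) := Del_pos hα hirr _
      have haR : (2:ℝ) ≤ (cfA α (l+2) : ℝ) := by exact_mod_cast ha2
      rcases hk0l.lt_or_eq with hlt | heq
      · -- k0 ≥ l+2
        have h1 : Del α k0 ≤ Del α (l+2) := Del_anti hα hirr (by omega)
        have hD2 : 0 < Del α (l+2) := Del_pos hα hirr _
        nlinarith
      · -- k0 = l+1
        have heq' : k0 = l + 1 := heq.symm
        have hexp : T = (b k0 : ℝ) * theta α k0 + tailSum α b N (k0+1) :=
          tailSum_expand b N k0 hk0N
        have hth : theta α k0 = (-1:ℝ)^k0 * Del α (k0+1) := theta_eq hα hirr k0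
        have hkey : s0 = (b k0 : ℝ) * Del α (k0+1) - (-1:ℝ)^(k0+1) * tailSum α b N (k0+1) := by
          rw [hs0def, hexp, hth, pow_succ]
          linear_combination ((b k0:ℝ) * Del α (k0+1)) * negpow_sq k0
        rw [heq'] at hkey
        have hbL' : (b (l+1) : ℝ) ≤ (cfA α (l+2) : ℝ) - 1 := hbL
        have hD2 : 0 < Del α (l+2) := Del_pos hα hirr _
        have hinv1'' := hinv1'
        rw [heq'] at hinv1''
        rw [hkey]
        rw [show l+1+1 = l+2 from rfl] at hinv1'' ⊢
        rw [show l+2+1 = l+3 from rfl] at hinv1''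
        nlinarith
  -- size facts
  have hDk0half : Del α k0 ≤ 1/2 := le_trans (Del_anti hα hirr hk0l) hhalf
  have hs0half : s0 < 1/2 := lt_of_lt_of_le hs0lt hDk0half
  have hirrx : ∀ x : ℕ, 1 ≤ x → Irrational ((x:ℝ) * α) := by
    intro x hx
    have hq : (((x:ℚ)):ℝ) = (x:ℝ) := by push_cast; rfl
    rw [show (x:ℝ) * α = ((x:ℚ):ℝ) * α by rw [hq]]
    exact hirr.ratCast_mul (by exact_mod_cast Nat.one_le_iff_ne_zero.mp hx)
  intro x hx1 hx2
  rcases eq_or_lt_of_le hx1 with heq | hxlt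
  · rw [← heq]
  have hm1 : 1 ≤ x - n := by omega
  have hmlt : x - n < cfQ α l + c * cfQ α (l+1) := by omega
  obtain ⟨m, hmdef⟩ : ∃ m, m = x - n := ⟨_, rfl⟩
  rw [← hmdef] at hm1 hmlt
  have hxnm : (x:ℝ) = (n:ℝ) + (m:ℝ) := by
    rw [hmdef, Nat.cast_sub hx1]; ring
  have hTP : (n:ℝ) * α - T = P := by linarith [hTS]
  rcases Nat.even_or_odd k0 with hpar | hpar
  · -- k0 even : T = s0 > 0
    have hpow : (-1:ℝ)^k0 = 1 := Even.neg_one_pow hpar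
    have hTs : T = s0 := by rw [hT, hpow, one_mul]
    rcases hf with rfl | rfl
    · -- f = fract
      have hfneq : Int.fract ((n:ℝ)*α) = s0 := by
        have h1 : Int.fract ((n:ℝ)*α) = Int.fract T :=
          Int.fract_eq_fract.mpr ⟨P, by linarith⟩
        rw [h1, hTs, Int.fract_eq_self.mpr ⟨le_of_lt hs0pos, by linarith⟩]
      show Int.fract ((n:ℝ)*α) ≤ Int.fract ((x:ℝ)*α)
      rw [hfneq]
      by_contra hcon
      push_neg at hcon
      have hfrx : Int.fract ((x:ℝ)*α) = Int.fract (T + (m:ℝ)*α) :=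
        Int.fract_eq_fract.mpr ⟨P, by rw [hxnm]; linarith [hTP]⟩
      obtain ⟨w, hwdef⟩ : ∃ w : ℝ, w = T + (m:ℝ)*α := ⟨_, rfl⟩
      obtain ⟨pw, hpwdef⟩ : ∃ pw : ℤ, pw = ⌊w⌋ := ⟨_, rfl⟩
      have hfw : Int.fract w = w - pw := by rw [hpwdef]; rfl
      have hwlt : w - pw < s0 := by
        rw [← hfw, hwdef]; rw [hfrx] at hcon; exact hcon
      have hirrw : Irrational w := by
        have : w = (x:ℝ)*α - P := by rw [hwdef, hxnm]; linarith [hTP]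
        rw [this]
        exact (hirrx x (by omega)).sub_intCast P
      have h0w : (0:ℝ) ≤ w - pw := by rw [← hfw]; exact Int.fract_nonneg w
      have hwpos : 0 < w - pw := by
        rcases lt_or_eq_of_le h0w with h | h
        · exact h
        · exfalso; exact (hirrw.ne_int pw) (by linarith)
      have hη : (m:ℝ)*α - (pw:ℝ) = (w - pw) - s0 := by rw [hwdef, hTs]; ring
      have hηsmall : |(m:ℝ)*α - pw| < s0 := by
        rw [hη, abs_lt]; constructor <;> linarith
      have hηsign : ((m:ℝ)*α - pw) * ((-1:ℝ)^k0 * s0) < 0 := by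
        rw [hpow, one_mul, hη]
        exact mul_neg_of_neg_of_pos (by linarith) hs0pos
      exact absurd (final_contra hα hirr l c k0 hc1 hk0l s0 hs0pos hs0lt hbound
        m pw hm1 hmlt hηsmall hηsign) (by simp)
    · -- f = fract ∘ neg : contradiction with hfn
      exfalso
      have h1 : Int.fract (-((n:ℝ)*α)) = Int.fract (-T) :=
        Int.fract_eq_fract.mpr ⟨-P, by push_cast; linarith⟩
      have h2 : Int.fract (-T) = 1 - s0 := by
        rw [hTs, show (-s0) = (1 - s0) + ((-1 : ℤ):ℝ) by push_cast; ring,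
          Int.fract_add_intCast, Int.fract_eq_self.mpr ⟨by linarith, by linarith⟩]
      simp only at hfn
      rw [h1, h2] at hfn
      linarith
  · -- k0 odd : T = -s0 < 0
    have hpow : (-1:ℝ)^k0 = -1 := Odd.neg_one_pow hpar
    have hTs : T = -s0 := by rw [hT, hpow]; ring
    rcases hf with rfl | rfl
    · -- f = fract : contradiction with hfn
      exfalso
      have h1 : Int.fract ((n:ℝ)*α) = Int.fract T :=
        Int.fract_eq_fract.mpr ⟨P, by linarith⟩
      have h2 : Int.fract T = 1 - s0 := by
        rw [hTs, show (-s0) = (1 - s0) + ((-1 : ℤ):ℝ) by push_cast; ring,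
          Int.fract_add_intCast, Int.fract_eq_self.mpr ⟨by linarith, by linarith⟩]
      simp only at hfn
      rw [h1, h2] at hfn
      linarith
    · -- f = fract ∘ neg
      have hfneq : Int.fract (-((n:ℝ)*α)) = s0 := by
        have h1 : Int.fract (-((n:ℝ)*α)) = Int.fract (-T) :=
          Int.fract_eq_fract.mpr ⟨-P, by push_cast; linarith⟩
        rw [h1, hTs, neg_neg, Int.fract_eq_self.mpr ⟨le_of_lt hs0pos, by linarith⟩]
      show Int.fract (-((n:ℝ)*α)) ≤ Int.fract (-((x:ℝ)*α))
      rw [hfneq]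
      by_contra hcon
      push_neg at hcon
      have hfrx : Int.fract (-((x:ℝ)*α)) = Int.fract (s0 - (m:ℝ)*α) :=
        Int.fract_eq_fract.mpr ⟨-P, by rw [hxnm]; push_cast; linarith [hTP, hTs]⟩
      obtain ⟨w, hwdef⟩ : ∃ w : ℝ, w = s0 - (m:ℝ)*α := ⟨_, rfl⟩
      obtain ⟨pw, hpwdef⟩ : ∃ pw : ℤ, pw = ⌊w⌋ := ⟨_, rfl⟩
      have hfw : Int.fract w = w - pw := by rw [hpwdef]; rfl
      have hwlt : w - pw < s0 := by
        rw [← hfw, hwdef]; rw [hfrx] at hcon; exact hcon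
      have hirrw : Irrational w := by
        have hweq : w = (P:ℝ) - (x:ℝ)*α := by
          rw [hwdef, hxnm]; push_cast; linarith [hTP, hTs]
        rw [hweq]
        exact (hirrx x (by omega)).intCast_sub P
      have h0w : (0:ℝ) ≤ w - pw := by rw [← hfw]; exact Int.fract_nonneg w
      have hwpos : 0 < w - pw := by
        rcases lt_or_eq_of_le h0w with h | h
        · exact h
        · exfalso; exact (hirrw.ne_int pw) (by linarith)
      have hη : (m:ℝ)*α - ((-pw : ℤ):ℝ) = s0 - (w - pw) := by
        push_cast; rw [hwdef]; ring
      have hηsmall : |(m:ℝ)*α - ((-pw : ℤ):ℝ)| < s0 := by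
        rw [hη, abs_lt]; constructor <;> linarith
      have hηsign : ((m:ℝ)*α - ((-pw : ℤ):ℝ)) * ((-1:ℝ)^k0 * s0) < 0 := by
        rw [hpow, hη]
        exact mul_neg_of_pos_of_neg (by linarith) (by nlinarith)
      exact absurd (final_contra hα hirr l c k0 hc1 hk0l s0 hs0pos hs0lt hbound
        m (-pw) hm1 hmlt hηsmall hηsign) (by simp)

end master

lemma Del_two_lt_half {α : ℝ} (hα : α ∈ Set.Ioo (0:ℝ) 1) (hirr : Irrational α) :
    Del α 2 < 1/2 := by
  have h := t_rel hα hirr 0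
  obtain ⟨_, ht0, ht1⟩ := cfFrac_basic hα hirr 1
  have haR : (1:ℝ) ≤ (cfA α 1 : ℝ) := by exact_mod_cast cfA_pos hα hirr 0
  have hD2 : Del α 2 = α * cfFrac α 1 := by
    rw [show (2:ℕ) = 1+1 from rfl, Del_succ, Del_one]
  have h' : α * ((cfA α 1:ℝ) + cfFrac α 1) = 1 := by
    rw [show cfFrac α 0 = α from rfl] at h; exact h
  have hmul : 0 < α * ((cfA α 1:ℝ) - cfFrac α 1) := mul_pos hα.1 (by linarith)
  rw [hD2]
  nlinarith


theorem stmt17 (α : ℝ) (hα : α ∈ Set.Ioo (0:ℝ) 1) (hirr : Irrational α)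
    (n : ℕ) (hn : 1 ≤ n) (b : ℕ → ℕ) (hb : OstrowskiRep α n b)
    (L : ℕ) (hL0 : ∀ k, k < L → b k = 0)
    (hLlow : 2 ≤ L ∨ (α < 1 / 2 ∧ 1 ≤ L))
    (f : ℝ → ℝ) (hf : f = (fun ξ => Int.fract ξ) ∨ f = (fun ξ => Int.fract (-ξ)))
    (hfn : f ((n : ℝ) * α) < 1 / 2) :
    (∀ x : ℕ, n ≤ x → x < n + cfQ α (L - 1) + cfQ α L →
        f ((n : ℝ) * α) ≤ f ((x : ℝ) * α)) ∧
      (b L ≤ cfA α (L + 1) - 1 →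
        ∀ x : ℕ, n ≤ x → x < n + cfQ α (L - 1) + 2 * cfQ α L →
          f ((n : ℝ) * α) ≤ f ((x : ℝ) * α)) := by

  have hL1 : 1 ≤ L := by rcases hLlow with h | h; omega; exact h.2
  obtain ⟨l, rfl⟩ : ∃ l, L = l + 1 := ⟨L - 1, by omega⟩
  have hLl : l + 1 - 1 = l := by omega
  rw [hLl]
  have hhalf : Del α (l+1) ≤ 1/2 := by
    rcases hLlow with h | h
    · calc Del α (l+1) ≤ Del α 2 := Del_anti hα hirr (by omega)
        _ ≤ 1/2 := (Del_two_lt_half hα hirr).le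
    · calc Del α (l+1) ≤ Del α 1 := Del_anti hα hirr (by omega)
        _ ≤ 1/2 := by rw [Del_one]; linarith [h.1]
  constructor
  · -- part 1
    intro x hx1 hx2
    exact master hα hirr n hn b hb l hL0 hhalf 1 (Or.inl rfl)
      (fun h => absurd h (by norm_num)) f hf hfn x hx1 (by omega)
  · -- part 2
    intro hbL x hx1 hx2
    have ha1 : 1 ≤ cfA α (l+2) := cfA_pos hα hirr (l+1)
    rcases Nat.lt_or_ge (cfA α (l+2)) 2 with ha | ha
    · -- a_{l+2} = 1 : b (l+1) = 0, use master at level l+1 with c = 1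
      have haeq : cfA α (l+2) = 1 := by omega
      have haeq' : cfA α (l+1+1) = 1 := haeq
      have hbL0 : b (l+1) = 0 := by omega
      have hL0' : ∀ k, k < l + 2 → b k = 0 := by
        intro k hk
        rcases Nat.lt_or_ge k (l+1) with h' | h'
        · exact hL0 k h'
        · have : k = l+1 := by omega
          rw [this]; exact hbL0
      have hhalf' : Del α (l+2) ≤ 1/2 :=
        le_trans (Del_anti hα hirr (by omega)) hhalf
      have hq2 : cfQ α (l+2) = cfQ α (l+1) + cfQ α l := by
        rw [show cfQ α (l+2) = cfA α (l + 2) * cfQ α (l + 1) + cfQ α l from rfl, haeq, one_mul]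
      exact master hα hirr n hn b hb (l+1) hL0' hhalf' 1 (Or.inl rfl)
        (fun h => absurd h (by norm_num)) f hf hfn x hx1
        (by have hq2' : cfQ α (l+1+1) = cfQ α (l+1) + cfQ α l := hq2; omega)
    · -- a_{l+2} ≥ 2 : use master with c = 2
      have hbR : (b (l+1) : ℝ) ≤ (cfA α (l+2) : ℝ) - 1 := by
        have : (b (l+1) : ℝ) ≤ ((cfA α (l+2) - 1 : ℕ) : ℝ) := by exact_mod_cast hbL
        rwa [Nat.cast_sub ha1, Nat.cast_one] at this
      exact master hα hirr n hn b hb l hL0 hhalf 2 (Or.inr rfl)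
        (fun _ => ⟨hbR, ha⟩) f hf hfn x hx1 (by omega)
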